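/- Let M ≥ 1, let d_1 < d_2 < ⋯ < d_M be distinct positive integers, and let g be a real number. Define ξ_v(η) = L_v^{(g-1/2)}(-η), Ξ_D(η) = W[ξ_{d_1}, …, ξ_{d_M}](η), and for n ≥ 0 the polynomial P_{D,n}(η) = det A(η), where A is the (M+1)×(M+1) matrix whose (j,k) entry for 1 ≤ k ≤ M is ξ_{d_k}^{(j-1)}(η) and whose (j, M+1) entry is ((d/dη - 1)^{j-1} L_n^{(g-1/2)})(η). Let ℓ_D = Σ_{j=1}^M d_j - M(M-1)/2 and c_D^Ξ = ( Π_{j=1}^M 1/d_j! ) · Π_{1≤j<k≤M} (d_k - d_j). Then: (i) Ξ_D has degree ℓ_D and leading coefficient c_D^Ξ; (ii) for every n ≥ 0, P_{D,n} has degree ℓ_D + n and leading coefficient (-1)^M · ((-1)^n / n!) · c_D^Ξ. In particular both leading coefficients are nonzero for every real g. -/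

import Mathlib

set_option maxHeartbeats 2000000

open Polynomial Finset Matrix


/-- The Laguerre polynomial `L_n^{(α)}` with real parameter:
`L_n^{(α)}(x) = Σ_{k=0}^{n} (-1)^k (α+k+1)_{n-k} / ((n-k)!·k!) · x^k`. -/
noncomputable def laguerreP (α : ℝ) (n : ℕ) : Polynomial ℝ :=
  ∑ k ∈ Finset.range (n + 1),
    Polynomial.C ((-1 : ℝ) ^ k * (ascPochhammer ℝ (n - k)).eval (α + k + 1) /
        ((n - k).factorial * k.factorial)) * Polynomial.X ^ k

/-- The type I virtual polynomial `ξ_v(η) = L_v^{(g-1/2)}(-η)`. -/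
noncomputable def lagXi (g : ℝ) (v : ℕ) : Polynomial ℝ :=
  (laguerreP (g - 1/2) v).comp (-Polynomial.X)

/-- The denominator polynomial `Ξ_D(η) = W[ξ_{d_1}, …, ξ_{d_M}](η)` of the
type I multi-indexed Laguerre polynomials. -/
noncomputable def lagXiD (M : ℕ) (d : Fin M → ℕ) (g : ℝ) : Polynomial ℝ :=
  Matrix.det (Matrix.of fun j k : Fin M =>
    (fun q => Polynomial.derivative q)^[(j : ℕ)] (lagXi g (d k)))

/-- The type I multi-indexed Laguerre polynomial `P_{D,n}`, as the
`(M+1)×(M+1)` determinant whose first `M` columns are the iterated derivatives of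
`ξ_{d_k}` and whose last column consists of `(d/dη - 1)^{j-1} L_n^{(g-1/2)}`. -/
noncomputable def lagPD (M : ℕ) (d : Fin M → ℕ) (g : ℝ) (n : ℕ) : Polynomial ℝ :=
  Matrix.det (Matrix.of fun j k : Fin (M + 1) =>
    if hk : (k : ℕ) < M then
      (fun q => Polynomial.derivative q)^[(j : ℕ)] (lagXi g (d ⟨(k : ℕ), hk⟩))
    else
      (fun q => Polynomial.derivative q - q)^[(j : ℕ)] (laguerreP (g - 1/2) n))

section Aux

lemma coeff_mul_of_natDegree_le' {p q : ℝ[X]} {m n : ℕ}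
    (hp : p.natDegree ≤ m) (hq : q.natDegree ≤ n) :
    (p * q).coeff (m + n) = p.coeff m * q.coeff n := by
  rw [coeff_mul, Finset.sum_eq_single (m, n)]
  · rintro ⟨i, j⟩ hb hne
    rw [Finset.HasAntidiagonal.mem_antidiagonal] at hb
    rcases lt_trichotomy i m with h | h | h
    · have hj : n < j := by omega
      rw [Polynomial.coeff_eq_zero_of_natDegree_lt (lt_of_le_of_lt hq hj), mul_zero]
    · exact absurd (by simp only [Prod.mk.injEq]; omega) hne
    · rw [Polynomial.coeff_eq_zero_of_natDegree_lt (lt_of_le_of_lt hp h), zero_mul]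
  · simp

lemma coeff_prod_of_natDegree_le'' {ι : Type*} (s : Finset ι) (p : ι → ℝ[X]) (e : ι → ℕ)
    (h : ∀ k ∈ s, (p k).natDegree ≤ e k) :
    (∏ k ∈ s, p k).coeff (∑ k ∈ s, e k) = ∏ k ∈ s, (p k).coeff (e k) := by
  induction s using Finset.cons_induction with
  | empty => simp
  | cons a s ha ih =>
    rw [Finset.prod_cons, Finset.sum_cons, Finset.prod_cons,
      coeff_mul_of_natDegree_le' (h a (Finset.mem_cons_self a s))
        ((Polynomial.natDegree_prod_le _ _).trans (Finset.sum_le_sum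
          (fun k hk => h k (Finset.mem_cons_of_mem hk)))),
      ih (fun k hk => h k (Finset.mem_cons_of_mem hk))]

lemma det_coeff_top {N : ℕ} (P : Matrix (Fin N) (Fin N) ℝ[X]) (e : Fin N → ℕ)
    (h : ∀ j k, (P j k).natDegree ≤ e k) :
    (P.det).coeff (∑ k, e k) = Matrix.det (Matrix.of fun j k => (P j k).coeff (e k)) := by
  rw [Matrix.det_apply, Matrix.det_apply, Polynomial.finset_sum_coeff]
  refine Finset.sum_congr rfl fun σ _ => ?_
  rw [Polynomial.coeff_smul, coeff_prod_of_natDegree_le'' _ _ _ (fun k _ => h (σ k) k)]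
  rfl

lemma det_natDegree_le {N : ℕ} (P : Matrix (Fin N) (Fin N) ℝ[X]) (e : Fin N → ℕ)
    (h : ∀ j k, (P j k).natDegree ≤ e k) :
    (P.det).natDegree ≤ ∑ k, e k := by
  rw [Matrix.det_apply']
  refine Polynomial.natDegree_sum_le_of_forall_le _ _ fun σ _ => ?_
  refine Polynomial.natDegree_mul_le.trans ?_
  rw [Polynomial.natDegree_intCast, zero_add]
  exact (Polynomial.natDegree_prod_le _ _).trans (Finset.sum_le_sum fun k _ => h (σ k) k)


lemma prod_Ioi_eq_prod_filter {M : ℕ} (f : Fin M → Fin M → ℝ) :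
    (∏ i : Fin M, ∏ j ∈ Finset.Ioi i, f i j) =
    ∏ q ∈ Finset.univ.filter (fun q : Fin M × Fin M => q.1 < q.2), f q.1 q.2 := by
  rw [Finset.prod_sigma']
  refine Finset.prod_nbij' (fun x => (x.1, x.2)) (fun q => ⟨q.1, q.2⟩) ?_ ?_ ?_ ?_ ?_
  · rintro ⟨i, j⟩ hx
    simp only [Finset.mem_sigma, Finset.mem_Ioi] at hx
    simp [hx.2]
  · rintro ⟨i, j⟩ hq
    simp only [Finset.mem_filter] at hq
    simp [hq.2]
  · rintro ⟨i, j⟩ _; rfl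
  · rintro ⟨i, j⟩ _; rfl
  · rintro ⟨i, j⟩ _; rfl

lemma det_descFactorial {M : ℕ} (d : Fin M → ℕ) :
    Matrix.det (Matrix.of fun j k : Fin M => ((d k).descFactorial (j : ℕ) : ℝ)) =
    ∏ q ∈ Finset.univ.filter (fun q : Fin M × Fin M => q.1 < q.2),
      ((d q.2 : ℝ) - (d q.1 : ℝ)) := by
  have h := Matrix.det_eval_matrixOfPolynomials_eq_det_vandermonde (R := ℝ)
    (fun i => (d i : ℝ)) (fun i => descPochhammer ℝ (i : ℕ))
    (fun i => descPochhammer_natDegree ℝ _)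
    (fun i => monic_descPochhammer _ _)
  have h2 : (Matrix.of fun j k : Fin M => ((d k).descFactorial (j : ℕ) : ℝ)) =
      (Matrix.of fun i j : Fin M =>
        (descPochhammer ℝ (j : ℕ)).eval ((d i : ℝ)))ᵀ := by
    ext j k
    simp [descPochhammer_eval_eq_descFactorial]
  rw [h2, Matrix.det_transpose, ← h, Matrix.det_vandermonde, prod_Ioi_eq_prod_filter]

lemma det_engine {N : ℕ} (P : Matrix (Fin N) (Fin N) ℝ[X]) (e : Fin N → ℕ)
    (c : Matrix (Fin N) (Fin N) ℝ)
    (hdeg : ∀ j k : Fin N, (X ^ (j : ℕ) * P j k).natDegree ≤ e k)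
    (hcoeff : ∀ j k : Fin N, (X ^ (j : ℕ) * P j k).coeff (e k) = c j k)
    (hc : c.det ≠ 0) :
    P.det ≠ 0 ∧ ((∑ j : Fin N, (j : ℕ)) + P.det.natDegree = ∑ k, e k) ∧
      P.det.leadingCoeff = c.det := by
  set Q : Matrix (Fin N) (Fin N) ℝ[X] := Matrix.of fun j k => X ^ (j : ℕ) * P j k with hQ
  have hdetQ : Q.det = X ^ (∑ j : Fin N, (j : ℕ)) * P.det := by
    rw [hQ, Matrix.det_mul_column (fun j : Fin N => (X : ℝ[X]) ^ (j : ℕ)) P,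
      Finset.prod_pow_eq_pow_sum]
  have hQcoeff : Q.det.coeff (∑ k, e k) = c.det := by
    rw [det_coeff_top Q e (fun j k => hdeg j k)]
    congr 1
    ext j k
    exact hcoeff j k
  have hQdeg : Q.det.natDegree ≤ ∑ k, e k := det_natDegree_le Q e (fun j k => hdeg j k)
  have hQne : Q.det ≠ 0 := fun h => hc (by rw [← hQcoeff, h, Polynomial.coeff_zero])
  have hPne : P.det ≠ 0 := by
    intro h; exact hQne (by rw [hdetQ, h, mul_zero])
  have hQnd : Q.det.natDegree = ∑ k, e k :=
    le_antisymm hQdeg (Polynomial.le_natDegree_of_ne_zero (hQcoeff ▸ hc))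
  have hXne : (X : ℝ[X]) ^ (∑ j : Fin N, (j : ℕ)) ≠ 0 := pow_ne_zero _ Polynomial.X_ne_zero
  have hnd : (∑ j : Fin N, (j : ℕ)) + P.det.natDegree = ∑ k, e k := by
    rw [← hQnd, hdetQ, Polynomial.natDegree_mul hXne hPne, Polynomial.natDegree_X_pow]
  refine ⟨hPne, hnd, ?_⟩
  have hl : Q.det.leadingCoeff = P.det.leadingCoeff := by
    rw [hdetQ, Polynomial.leadingCoeff_mul, Polynomial.leadingCoeff_X_pow, one_mul]
  rw [← hl, Polynomial.leadingCoeff, hQnd, hQcoeff]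


lemma laguerreP_natDegree_le (α : ℝ) (n : ℕ) : (laguerreP α n).natDegree ≤ n := by
  refine Polynomial.natDegree_sum_le_of_forall_le _ _ fun k hk => ?_
  refine (Polynomial.natDegree_C_mul_le _ _).trans ?_
  rw [Polynomial.natDegree_X_pow]
  exact Nat.lt_succ_iff.mp (Finset.mem_range.mp hk)

lemma laguerreP_coeff (α : ℝ) (n : ℕ) :
    (laguerreP α n).coeff n = (-1 : ℝ) ^ n / n.factorial := by
  rw [laguerreP, Polynomial.finset_sum_coeff, Finset.sum_eq_single n]
  · simp [coeff_C_mul, coeff_X_pow]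
  · intro k hk hne
    rw [Polynomial.coeff_C_mul, Polynomial.coeff_X_pow, if_neg (fun h => hne h.symm), mul_zero]
  · simp

lemma coeff_comp_neg_X (p : ℝ[X]) (k : ℕ) :
    (p.comp (-X)).coeff k = (-1 : ℝ) ^ k * p.coeff k := by
  induction p using Polynomial.induction_on' with
  | add p q hp hq => simp [Polynomial.add_comp, hp, hq, mul_add]
  | monomial m a =>
    have hX : (-X : ℝ[X]) = Polynomial.C (-1) * X := by simp
    rw [Polynomial.monomial_comp, hX, mul_pow, ← Polynomial.C_pow]
    rcases eq_or_ne m k with rfl | h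
    · rw [Polynomial.coeff_C_mul, Polynomial.coeff_C_mul, Polynomial.coeff_X_pow, if_pos rfl,
        Polynomial.coeff_monomial, if_pos rfl]
      ring
    · rw [Polynomial.coeff_C_mul, Polynomial.coeff_C_mul, Polynomial.coeff_X_pow,
        if_neg (fun hh => h hh.symm), Polynomial.coeff_monomial, if_neg h]
      ring

lemma lagXi_natDegree_le (g : ℝ) (v : ℕ) : (lagXi g v).natDegree ≤ v := by
  refine Polynomial.natDegree_comp_le.trans ?_
  have h1 : (-X : ℝ[X]).natDegree = 1 := by
    simpa using Polynomial.natDegree_neg (X : ℝ[X])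
  rw [h1, mul_one]
  exact laguerreP_natDegree_le _ _

lemma lagXi_coeff (g : ℝ) (v : ℕ) :
    (lagXi g v).coeff v = ((v.factorial : ℝ))⁻¹ := by
  rw [lagXi, coeff_comp_neg_X, laguerreP_coeff, div_eq_mul_inv, ← mul_assoc, ← mul_pow]
  simp

lemma wrons_entry_coeff (f : ℝ[X]) (D j : ℕ) (hf : f.natDegree ≤ D) :
    (X ^ j * Polynomial.derivative^[j] f).coeff D
      = (D.descFactorial j : ℝ) * f.coeff D := by
  by_cases hj : j ≤ D
  · obtain ⟨m, rfl⟩ := Nat.exists_eq_add_of_le hj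
    rw [show j + m = m + j from Nat.add_comm j m, Polynomial.coeff_X_pow_mul,
      Polynomial.coeff_iterate_derivative, nsmul_eq_mul]
  · have h1 : Polynomial.derivative^[j] f = 0 :=
      Polynomial.iterate_derivative_eq_zero (lt_of_le_of_lt hf (not_le.mp hj))
    rw [h1, mul_zero, Nat.descFactorial_eq_zero_iff_lt.mpr (not_le.mp hj)]
    simp

lemma wrons_entry_natDegree (f : ℝ[X]) (D j : ℕ) (hf : f.natDegree ≤ D) :
    (X ^ j * Polynomial.derivative^[j] f).natDegree ≤ D := by
  by_cases hj : j ≤ f.natDegree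
  · refine Polynomial.natDegree_mul_le.trans ?_
    have h2 := Polynomial.natDegree_iterate_derivative f j
    rw [Polynomial.natDegree_X_pow]
    omega
  · rw [Polynomial.iterate_derivative_eq_zero (not_le.mp hj), mul_zero]
    simp

lemma Toper_natDegree_le (f : ℝ[X]) (n : ℕ) (hd : f.natDegree ≤ n) (j : ℕ) :
    ((fun q : ℝ[X] => Polynomial.derivative q - q)^[j] f).natDegree ≤ n := by
  induction j with
  | zero => simpa using hd
  | succ j ih =>
    rw [Function.iterate_succ_apply']
    refine (Polynomial.natDegree_sub_le _ _).trans (max_le ?_ ih)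
    exact (Polynomial.natDegree_derivative_le _).trans (by omega)

lemma Toper_coeff (f : ℝ[X]) (n : ℕ) (hd : f.natDegree ≤ n) (j : ℕ) :
    ((fun q : ℝ[X] => Polynomial.derivative q - q)^[j] f).coeff n
      = (-1 : ℝ) ^ j * f.coeff n := by
  induction j with
  | zero => simp
  | succ j ih =>
    rw [Function.iterate_succ_apply', Polynomial.coeff_sub, Polynomial.coeff_derivative,
      Polynomial.coeff_eq_zero_of_natDegree_lt
        (lt_of_le_of_lt (Toper_natDegree_le f n hd j) (Nat.lt_succ_self n)), ih]
    ring

end Aux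

/-- degrees and leading coefficients of `Ξ_D` and `P_{D,n}` in the
type I Laguerre case: `deg Ξ_D = ℓ_D`, `lc Ξ_D = c_D^Ξ = (∏ 1/d_j!)·∏_{j<k}(d_k-d_j)`,
`deg P_{D,n} = ℓ_D + n`, `lc P_{D,n} = (-1)^M ((-1)^n/n!) c_D^Ξ`, with
`ℓ_D = Σ d_j - M(M-1)/2`; in particular both leading coefficients are nonzero. -/
theorem multiindexed_laguerre_degrees (M : ℕ) (hM : 1 ≤ M)
    (d : Fin M → ℕ) (hmono : StrictMono d) (hd1 : ∀ j, 1 ≤ d j) (g : ℝ)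
    (ℓD : ℕ) (hℓ : ℓD = (∑ j, d j) - M * (M - 1) / 2)
    (cΞ : ℝ)
    (hc : cΞ = (∏ j, ((d j).factorial : ℝ)⁻¹) *
      ∏ q ∈ Finset.univ.filter (fun q : Fin M × Fin M => q.1 < q.2),
        ((d q.2 : ℝ) - (d q.1 : ℝ))) :
    (lagXiD M d g).degree = (ℓD : WithBot ℕ) ∧
    (lagXiD M d g).leadingCoeff = cΞ ∧
    cΞ ≠ 0 ∧
    (∀ n : ℕ, (lagPD M d g n).degree = ((ℓD + n : ℕ) : WithBot ℕ) ∧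
      (lagPD M d g n).leadingCoeff = (-1 : ℝ) ^ M * ((-1 : ℝ) ^ n / n.factorial) * cΞ ∧
      (-1 : ℝ) ^ M * ((-1 : ℝ) ^ n / n.factorial) * cΞ ≠ 0) := by
  set PXi : Matrix (Fin M) (Fin M) ℝ[X] :=
    Matrix.of (fun j k : Fin M =>
      (fun q => Polynomial.derivative q)^[(j : ℕ)] (lagXi g (d k))) with hPXi
  have hXiD : lagXiD M d g = PXi.det := rfl
  set cM : Matrix (Fin M) (Fin M) ℝ :=
    Matrix.of (fun j k : Fin M =>
      ((d k).factorial : ℝ)⁻¹ * ((d k).descFactorial (j : ℕ) : ℝ)) with hcM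
  have hcMdet : cM.det = cΞ := by
    rw [hcM, show (Matrix.of fun j k : Fin M =>
          ((d k).factorial : ℝ)⁻¹ * ((d k).descFactorial (j : ℕ) : ℝ)).det =
        (∏ k, ((d k).factorial : ℝ)⁻¹) *
          (Matrix.of fun j k : Fin M => ((d k).descFactorial (j : ℕ) : ℝ)).det from
        Matrix.det_mul_row (fun k => ((d k).factorial : ℝ)⁻¹)
          (Matrix.of fun j k : Fin M => ((d k).descFactorial (j : ℕ) : ℝ)),
      det_descFactorial, hc]
  have hcne : cΞ ≠ 0 := by
    rw [hc]
    refine mul_ne_zero ?_ ?_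
    · exact Finset.prod_ne_zero_iff.mpr fun j _ =>
        inv_ne_zero (Nat.cast_ne_zero.mpr (Nat.factorial_ne_zero _))
    · refine Finset.prod_ne_zero_iff.mpr fun q hq => sub_ne_zero_of_ne ?_
      have h := hmono (Finset.mem_filter.mp hq).2
      exact_mod_cast h.ne'
  have hdeg1 : ∀ j k : Fin M, (X ^ (j : ℕ) * PXi j k).natDegree ≤ d k := fun j k =>
    wrons_entry_natDegree _ _ _ (lagXi_natDegree_le g (d k))
  have hcoeff1 : ∀ j k : Fin M, (X ^ (j : ℕ) * PXi j k).coeff (d k) = cM j k := by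
    intro j k
    rw [show PXi j k = Polynomial.derivative^[(j : ℕ)] (lagXi g (d k)) from rfl,
      wrons_entry_coeff _ _ _ (lagXi_natDegree_le g (d k)), lagXi_coeff]
    rw [hcM]
    simp [mul_comm]
  obtain ⟨hne1, hsum1, hlc1⟩ :=
    det_engine PXi (fun k => d k) cM hdeg1 hcoeff1 (by rw [hcMdet]; exact hcne)
  have hT : (∑ j : Fin M, (j : ℕ)) = M * (M - 1) / 2 := by
    rw [Fin.sum_univ_eq_sum_range (fun i => i) M, Finset.sum_range_id]
  have hndXi : (lagXiD M d g).natDegree = ℓD := by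
    rw [hXiD, hℓ, ← hT]
    exact (Nat.eq_sub_of_add_eq' hsum1).symm ▸ rfl
  refine ⟨?_, ?_, hcne, ?_⟩
  · rw [hXiD, Polynomial.degree_eq_natDegree hne1, ← hXiD, hndXi]
  · rw [hXiD, hlc1, hcMdet]
  intro n
  set L := laguerreP (g - 1/2) n with hL
  set tl : ℝ := (-1 : ℝ) ^ M * ((-1 : ℝ) ^ n / n.factorial) with htl
  have htlne : tl ≠ 0 := by
    rw [htl]
    refine mul_ne_zero (pow_ne_zero _ (neg_ne_zero.mpr one_ne_zero)) ?_
    exact div_ne_zero (pow_ne_zero _ (neg_ne_zero.mpr one_ne_zero))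
      (Nat.cast_ne_zero.mpr (Nat.factorial_ne_zero n))
  set PP : Matrix (Fin (M + 1)) (Fin (M + 1)) ℝ[X] :=
    Matrix.of (fun j k : Fin (M + 1) =>
      if hk : (k : ℕ) < M then
        (fun q => Polynomial.derivative q)^[(j : ℕ)] (lagXi g (d ⟨(k : ℕ), hk⟩))
      else
        (fun q => Polynomial.derivative q - q)^[(j : ℕ)] L) with hPP
  have hPD : lagPD M d g n = PP.det := rfl
  set e' : Fin (M + 1) → ℕ :=
    fun k => if hk : (k : ℕ) < M then d ⟨(k : ℕ), hk⟩ else n + M with he'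
  set c' : Matrix (Fin (M + 1)) (Fin (M + 1)) ℝ :=
    Matrix.of (fun j k : Fin (M + 1) =>
      if hk : (k : ℕ) < M then
        ((d ⟨(k : ℕ), hk⟩).factorial : ℝ)⁻¹ * ((d ⟨(k : ℕ), hk⟩).descFactorial (j : ℕ) : ℝ)
      else if (j : ℕ) = M then tl else 0) with hc'
  have hdeg2 : ∀ j k : Fin (M + 1), (X ^ (j : ℕ) * PP j k).natDegree ≤ e' k := by
    intro j k
    by_cases hk : (k : ℕ) < M
    · simp only [hPP, he', Matrix.of_apply, dif_pos hk]
      exact wrons_entry_natDegree _ _ _ (lagXi_natDegree_le g _)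
    · simp only [hPP, he', Matrix.of_apply, dif_neg hk]
      refine Polynomial.natDegree_mul_le.trans ?_
      rw [Polynomial.natDegree_X_pow]
      have h2 := Toper_natDegree_le L n (laguerreP_natDegree_le _ _) (j : ℕ)
      have h3 := Fin.is_le j
      omega
  have hcoeff2 : ∀ j k : Fin (M + 1), (X ^ (j : ℕ) * PP j k).coeff (e' k) = c' j k := by
    intro j k
    by_cases hk : (k : ℕ) < M
    · simp only [hPP, he', hc', Matrix.of_apply, dif_pos hk]
      rw [wrons_entry_coeff _ _ _ (lagXi_natDegree_le g _), lagXi_coeff]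
      ring
    · simp only [hPP, he', hc', Matrix.of_apply, dif_neg hk]
      have hjle : (j : ℕ) ≤ M := Fin.is_le j
      have hrw : n + M = (n + (M - (j : ℕ))) + (j : ℕ) := by omega
      rw [hrw, Polynomial.coeff_X_pow_mul]
      by_cases hjM : (j : ℕ) = M
      · rw [if_pos hjM, show n + (M - (j : ℕ)) = n from by omega,
          Toper_coeff L n (laguerreP_natDegree_le _ _) (j : ℕ), hjM, hL, laguerreP_coeff, htl]
      · rw [if_neg hjM, Polynomial.coeff_eq_zero_of_natDegree_lt]
        exact lt_of_le_of_lt (Toper_natDegree_le L n (laguerreP_natDegree_le _ _) _) (by omega)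
  have hlastcoe : ((Fin.last M : Fin (M + 1)) : ℕ) = M := rfl
  have hc'det : c'.det = tl * cΞ := by
    rw [Matrix.det_succ_column c' (Fin.last M), Finset.sum_eq_single (Fin.last M)]
    · have hentry : c' (Fin.last M) (Fin.last M) = tl := by
        simp [hc']
      have hsub : (c'.submatrix (Fin.last M).succAbove (Fin.last M).succAbove) = cM := by
        ext j k
        have hk : ((Fin.castSucc k : Fin (M + 1)) : ℕ) < M := k.is_lt
        simp only [Matrix.submatrix_apply, Fin.succAbove_last, hc', hcM, Matrix.of_apply,
          dif_pos hk, Fin.coe_castSucc, Fin.eta]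
        rw [dif_pos k.is_lt]
      rw [hentry, hsub, hcMdet, hlastcoe]
      have hev : ((-1 : ℝ)) ^ (M + M) = 1 := Even.neg_one_pow ⟨M, rfl⟩
      rw [hev, one_mul]
    · intro i _ hne
      have hzero : c' i (Fin.last M) = 0 := by
        have hi : (i : ℕ) ≠ M := fun h => hne (Fin.ext (h.trans hlastcoe.symm))
        simp [hc', hi]
      rw [hzero]
      ring
    · simp
  obtain ⟨hne2, hsum2, hlc2⟩ :=
    det_engine PP e' c' hdeg2 hcoeff2 (by rw [hc'det]; exact mul_ne_zero htlne hcne)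
  have hsume : (∑ k, e' k) = (∑ k, d k) + (n + M) := by
    rw [Fin.sum_univ_castSucc]
    congr 1
    · refine Finset.sum_congr rfl fun k _ => ?_
      have hk : ((Fin.castSucc k : Fin (M + 1)) : ℕ) < M := k.is_lt
      simp only [he', dif_pos hk, Fin.coe_castSucc, Fin.eta]
    · simp [he']
  have hT' : (∑ j : Fin (M + 1), (j : ℕ)) = (∑ j : Fin M, (j : ℕ)) + M := by
    rw [Fin.sum_univ_castSucc]
    simp
  have hnd2 : PP.det.natDegree = ℓD + n := by
    rw [hsume, hT'] at hsum2
    have h4 : (lagXiD M d g).natDegree = ℓD := hndXi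
    rw [hXiD] at h4
    omega
  refine ⟨?_, ?_, mul_ne_zero htlne hcne⟩
  · rw [hPD, Polynomial.degree_eq_natDegree hne2, hnd2]
  · rw [hPD, hlc2, hc'det]
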